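/- Let α be a rational number with 2 < α < 3, and let u be a word over a finite alphabet all of whose proper prefixes are dual α-A-free. Then u is dual α-A-free if and only if no suffix of u can be written as x ++ y ++ z with z nonempty, y ~ z, x Abelian equivalent to the suffix of z of length |x|, and |x ++ y ++ z| ≥ α·|z|. (This is the correctness criterion (†) underlying Algorithm 5.) -/

import Mathlib

/-- `x` is a factor (contiguous subword) of `w`. -/
def IsFactor {A : Type*} (x w : List A) : Prop := ∃ p s, w = p ++ x ++ s

/-- `w` is a strong Abelian `β`-power: `w = u₁ ++ u₂ ++ ⋯ ++ u_k ++ u'` where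
`k = ⌊β⌋`, `u₁ ≠ []`, all `uᵢ` are Abelian equivalent (permutations of each other),
`u'` is Abelian equivalent to the prefix of `u₁` of length `|u'| < |u₁|`,
and `|w| = β·|u₁|`. -/
def IsStrongAPower {A : Type*} (β : ℚ) (w : List A) : Prop :=
  ∃ (u₁ : List A) (us : List (List A)) (u' : List A),
    u₁ ≠ [] ∧
    ((us.length : ℤ) + 1 = ⌊β⌋) ∧
    (∀ u ∈ us, u.Perm u₁) ∧
    u'.length < u₁.length ∧
    u'.Perm (u₁.take u'.length) ∧
    w = (u₁ :: us).flatten ++ u' ∧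
    ((w.length : ℚ) = β * u₁.length)

/-- `w` is `β`-A-free: no factor of `w` is a strong Abelian `γ`-power for a rational `γ ≥ β`. -/
def AFree {A : Type*} (β : ℚ) (w : List A) : Prop :=
  ∀ x, IsFactor x w → ∀ γ : ℚ, β ≤ γ → ¬ IsStrongAPower γ x

/-- `w` is `β⁺`-A-free: no factor of `w` is a strong Abelian `γ`-power for a rational `γ > β`. -/
def APlusFree {A : Type*} (β : ℚ) (w : List A) : Prop :=
  ∀ x, IsFactor x w → ∀ γ : ℚ, β < γ → ¬ IsStrongAPower γ x

/-- `w` is dual `β`-A-free: no factor of `w` is a dual strong Abelian `γ`-power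
(i.e. has a reversal that is a strong Abelian `γ`-power) for a rational `γ ≥ β`. -/
def DualAFree {A : Type*} (β : ℚ) (w : List A) : Prop :=
  ∀ x, IsFactor x w → ∀ γ : ℚ, β ≤ γ → ¬ IsStrongAPower γ x.reverse

lemma take_rev_perm {A : Type*} (z : List A) (m : ℕ) :
    (z.reverse.take m).Perm (z.drop (z.length - m)) := by
  have h := List.reverse_take (l := z.reverse) (i := m)
  rw [List.reverse_reverse, List.length_reverse] at h
  exact h ▸ (List.reverse_perm (z.reverse.take m)).symm

lemma drop_rev_perm {A : Type*} (l : List A) (m : ℕ) :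
    (l.reverse.drop (l.length - m)).Perm (l.take m) := by
  rw [← List.reverse_take]
  exact List.reverse_perm _

theorem statement_10 {A : Type*} [Fintype A] (α : ℚ) (hα₁ : 2 < α) (hα₂ : α < 3)
    (u : List A) (hpre : ∀ v : List A, v <+: u → v ≠ u → DualAFree α v) :
    DualAFree α u ↔
      ¬ ∃ (p x y z : List A), u = p ++ (x ++ y ++ z) ∧ z ≠ [] ∧ y.Perm z ∧
        x.Perm (z.drop (z.length - x.length)) ∧
        α * (z.length : ℚ) ≤ (x.length : ℚ) + (y.length : ℚ) + (z.length : ℚ) := by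
  constructor
  · intro hfree
    rintro ⟨p, x, y, z, hu, hz, hyz, hxz, hlen⟩
    have hyl : y.length = z.length := hyz.length_eq
    have hzpos : 0 < z.length := List.length_pos_iff.mpr hz
    have hxle : x.length ≤ z.length := by
      have h := hxz.length_eq
      rw [List.length_drop] at h
      omega
    rcases eq_or_lt_of_le hxle with heq | hlt
    · -- γ = 3
      refine hfree (x ++ y ++ z) ⟨p, [], by simpa using hu⟩ 3 (le_of_lt hα₂) ?_
      refine ⟨z.reverse, [y.reverse, x.reverse], [], by simpa using hz, by norm_num, ?_, by
        simpa using hzpos, by simp, by simp, ?_⟩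
      · rintro w hw
        simp only [List.mem_cons, List.mem_singleton, List.not_mem_nil, or_false] at hw
        rcases hw with rfl | rfl
        · exact (List.reverse_perm y).trans (hyz.trans (List.reverse_perm z).symm)
        · have hxz' : x.Perm z := by
            rw [heq] at hxz; simpa using hxz
          exact (List.reverse_perm x).trans (hxz'.trans (List.reverse_perm z).symm)
      · simp only [List.length_append, List.length_reverse]
        push_cast
        rw [heq, hyl]
        ring
    · -- γ = (|x| + 2|z|)/|z|
      set γ : ℚ := ((x.length : ℚ) + 2 * z.length) / z.length with hγdef
      have hzq : (0:ℚ) < (z.length : ℚ) := by exact_mod_cast hzpos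
      have hαγ : α ≤ γ := by
        rw [hγdef, le_div_iff₀ hzq]
        calc α * z.length ≤ (x.length : ℚ) + y.length + z.length := hlen
          _ = (x.length : ℚ) + 2 * z.length := by rw [hyl]; ring
      have hγfloor : ⌊γ⌋ = 2 := by
        rw [Int.floor_eq_iff]
        constructor
        · rw [hγdef, le_div_iff₀ hzq]
          push_cast
          nlinarith [Nat.cast_nonneg (α := ℚ) x.length]
        · rw [hγdef, div_lt_iff₀ hzq]
          have hxq : (x.length : ℚ) < z.length := by exact_mod_cast hlt
          push_cast
          nlinarith
      refine hfree (x ++ y ++ z) ⟨p, [], by simpa using hu⟩ γ hαγ ?_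
      refine ⟨z.reverse, [y.reverse], x.reverse, by simpa using hz, by
        simp [hγfloor], ?_, by simpa using hlt, ?_, by simp, ?_⟩
      · rintro w hw
        simp only [List.mem_singleton] at hw
        subst hw
        exact (List.reverse_perm y).trans (hyz.trans (List.reverse_perm z).symm)
      · have h1 : (z.reverse.take x.reverse.length).Perm (z.drop (z.length - x.length)) := by
          simpa using take_rev_perm z x.length
        exact ((List.reverse_perm x).trans hxz).trans h1.symm
      · simp only [List.length_append, List.length_reverse]
        rw [hγdef, div_mul_cancel₀ _ (ne_of_gt hzq)]
        push_cast
        rw [hyl]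
        ring
  · intro hno w hfac γ hγ hpow
    obtain ⟨p, s, hu⟩ := hfac
    rcases eq_or_ne s [] with rfl | hs
    · -- w is a suffix of u
      simp only [List.append_nil] at hu
      obtain ⟨u₁, us, u', hne, hk, hperm, hlt, hpp, hflat, hlenq⟩ := hpow
      have hfl2 : (2:ℤ) ≤ ⌊γ⌋ := by
        apply Int.le_floor.mpr
        exact_mod_cast le_trans (le_of_lt hα₁) hγ
      obtain ⟨u₂, rest, rfl⟩ : ∃ u₂ rest, us = u₂ :: rest := by
        cases us with
        | nil => simp at hk; omega
        | cons a l => exact ⟨a, l, rfl⟩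
      have hu₂ : u₂.Perm u₁ := hperm u₂ (by simp)
      have hw : w = ((u₁ :: u₂ :: rest).flatten ++ u').reverse := by
        rw [← hflat, List.reverse_reverse]
      have hu₁pos : 0 < u₁.length := List.length_pos_iff.mpr hne
      have hu₁q : (0:ℚ) < (u₁.length : ℚ) := by exact_mod_cast hu₁pos
      cases rest with
      | nil =>
        apply hno
        refine ⟨p, u'.reverse, u₂.reverse, u₁.reverse, ?_, by simpa using hne, ?_, ?_, ?_⟩
        · rw [hu, hw]; simp
        · exact (List.reverse_perm u₂).trans (hu₂.trans (List.reverse_perm u₁).symm)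
        · simp only [List.length_reverse]
          exact ((List.reverse_perm u').trans hpp).trans (drop_rev_perm u₁ u'.length).symm
        · have hwl : w.length = u₁.length + u₂.length + u'.length := by
            simp [hw]; omega
          rw [List.length_reverse] at hlenq
          have h1 : α * (u₁.length : ℚ) ≤ γ * u₁.length :=
            mul_le_mul_of_nonneg_right hγ (le_of_lt hu₁q)
          rw [← hlenq] at h1
          have h2 : (w.length : ℚ) = u'.length + u₂.length + u₁.length := by
            rw [hwl]; push_cast; ring
          simp only [List.length_reverse]
          linarith
      | cons u₃ rest' =>
        have hu₃ : u₃.Perm u₁ := hperm u₃ (by simp)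
        apply hno
        refine ⟨p ++ (u'.reverse ++ rest'.flatten.reverse), u₃.reverse, u₂.reverse,
          u₁.reverse, ?_, by simpa using hne, ?_, ?_, ?_⟩
        · rw [hu, hw]; simp
        · exact (List.reverse_perm u₂).trans (hu₂.trans (List.reverse_perm u₁).symm)
        · have hl : u₃.length = u₁.length := hu₃.length_eq
          simp only [List.length_reverse, hl, Nat.sub_self, List.drop_zero]
          exact (List.reverse_perm u₃).trans (hu₃.trans (List.reverse_perm u₁).symm)
        · simp only [List.length_reverse]
          rw [hu₃.length_eq, hu₂.length_eq]
          nlinarith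
    · -- proper prefix case
      have hpref : (p ++ w) <+: u := ⟨s, by simpa using hu.symm⟩
      have hne' : p ++ w ≠ u := by
        intro h
        apply hs
        have h2 := hu.symm.trans h.symm
        simpa using h2
      exact (hpre (p ++ w) hpref hne') w ⟨p, [], by simp⟩ γ hγ hpow
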